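/- (Proposition 1.) Let Ω, N, G be nonempty finite index sets, K ≥ 1, and let {0,...,K−1} be partitioned into R contiguous clusters K_0,...,K_{R−1}. Let Δ > 0, and fix parameters: efficiencies η^c_n, η^d_n, initial states E^{s,0}_n, storage bounds E^s_min,n ≤ E^s_max,n, charging bounds P^c_min,n ≤ P^c_max,n, discharging bounds P^d_min,n ≤ P^d_max,n, thermal bounds 0 ≤ P^th_max,g, emission coefficients α_g ≥ 0, β_g, limits L_g, ramp limits R^th_g ≥ 0, forecasts P^vRES_{ω,k}, D_{ω,k}, with all variables e_{ω,k}, e^ns_{ω,k}, e^s_{n,ω,k}, p^th_{g,ω,k}, p^c_{n,ω,k}, p^d_{n,ω,k} nonnegative. Suppose the full-scale constraints hold for all n, g, ω, k: (i) storage dynamics e^s_{n,ω,k+1} = e^s_{n,ω,k} + (η^c_n p^c_{n,ω,k} − η^d_n p^d_{n,ω,k})Δ for k ≤ K−2, with e^s_{n,ω,0} = E^{s,0}_n and E^s_min,n ≤ e^s_{n,ω,k} ≤ E^s_max,n; (ii) P^c_min,n ≤ p^c_{n,ω,k} ≤ P^c_max,n and P^d_min,n ≤ p^d_{n,ω,k}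 ≤ P^d_max,n; (iii) 0 ≤ p^th_{g,ω,k} ≤ P^th_max,g, α_g (p^th_{g,ω,k})² + β_g p^th_{g,ω,k} ≤ L_g, and |p^th_{g,ω,k+1} − p^th_{g,ω,k}| ≤ R^th_g for k ≤ K−2; (iv) energy balance e_{ω,k} = P^vRES_{ω,k}Δ − D_{ω,k} + Σ_n (p^d_{n,ω,k} − p^c_{n,ω,k})Δ + Σ_g p^th_{g,ω,k}Δ + e^ns_{ω,k}. Define aggregated variables: ē_{ω,r}, ē^ns_{ω,r}, p̄^th_{g,ω,r}, p̄^c_{n,ω,r}, p̄^d_{n,ω,r} as cluster averages over K_r, and ē^s_{n,ω,r} := e^s_{n,ω,min(K_r)}. Then all aggregated constraints hold for all n, g, ω, r: (a) ē_{ω,r} = Σ_{k∈K_r}(P^vRES_{ω,k}Δ − D_{ω,k})/|K_r| + Σ_g p̄^th_{g,ω,r}Δ + ē^ns_{ω,r} + Σ_n (p̄^d_{n,ω,r} − p̄^c_{n,ω,r})Δ; (b) ē^s_{n,ω,r+1} = ē^s_{n,ω,r} + |K_r|(η^c_n p̄^c_{n,ω,r} − η^d_n p̄^d_{n,ω,r})Δ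 for r ≤ R−2, with ē^s_{n,ω,0} = E^{s,0}_n and E^s_min,n ≤ ē^s_{n,ω,r} ≤ E^s_max,n; (c) P^c_min,n ≤ p̄^c_{n,ω,r} ≤ P^c_max,n, P^d_min,n ≤ p̄^d_{n,ω,r} ≤ P^d_max,n, and 0 ≤ p̄^th_{g,ω,r} ≤ P^th_max,g; (d) α_g |K_r| (p̄^th_{g,ω,r})² − α_g(|K_r|−1)(P^th_max,g)² + β_g p̄^th_{g,ω,r} ≤ L_g; (e) p̄^th_{g,ω,r+1} − p̄^th_{g,ω,r}|K_r| ≤ R^th_g + R^th_g(|K_{r+1}|−1)/2 and p̄^th_{g,ω,r} − p̄^th_{g,ω,r+1}|K_{r+1}| ≤ R^th_g + R^th_g(|K_r|−1)/2 for r ≤ R−2; and all aggregated variables are nonnegative. Moreover, for any real cost coefficients C^th_g, C^ns, C^c_n, C^d_n and C^ref_n ≥ 0, E^ref_n, and prices π_{ω,k}, the aggregated objective value F̄ evaluated at these aggregated variables (with cluster-wise maximum prices and cluster weights |K_r|) satisfies F̄ ≤ F, where F is the full-scale objective value at the original variables. -/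

import Mathlib

/-- Decision variables of the VPP dispatch model (full-scale: indexed by time steps `k`;
temporally aggregated: indexed by clusters `r`). -/
structure DispatchVars (Ω N G : Type*) where
  /-- energy output of the VPP -/
  e : Ω → ℕ → ℝ
  /-- non-supplied energy -/
  ens : Ω → ℕ → ℝ
  /-- storage state of charge -/
  es : N → Ω → ℕ → ℝ
  /-- thermal power output -/
  pth : G → Ω → ℕ → ℝ
  /-- storage charging power -/
  pc : N → Ω → ℕ → ℝ
  /-- storage discharging power -/
  pd : N → Ω → ℕ → ℝ

/-- Parameters of the VPP dispatch model. -/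
structure VPPParams (Ω N G : Type*) where
  /-- sampling time -/
  Δ : ℝ
  /-- charging / discharging efficiencies -/
  (ηc ηd : N → ℝ)
  /-- initial storage states -/
  Es0 : N → ℝ
  /-- storage state bounds -/
  (Esmin Esmax : N → ℝ)
  /-- charging power bounds -/
  (Pcmin Pcmax : N → ℝ)
  /-- discharging power bounds -/
  (Pdmin Pdmax : N → ℝ)
  /-- thermal capacity -/
  Pthmax : G → ℝ
  /-- emission coefficients and limits -/
  (αg βg Lg : G → ℝ)
  /-- ramp limits -/
  Rth : G → ℝ
  /-- vRES forecast and demand forecast -/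
  (Pv D : Ω → ℕ → ℝ)
  /-- energy prices -/
  π : Ω → ℕ → ℝ
  /-- thermal generation cost -/
  Cth : G → ℝ
  /-- non-supplied energy penalty -/
  Cns : ℝ
  /-- storage charging / discharging costs -/
  (Cc Cd : N → ℝ)
  /-- storage reference-deviation penalty and reference states -/
  (Cref Eref : N → ℝ)

/-- Feasibility for the full-scale stochastic dispatch model over the horizon
`{0, ..., K-1}`: storage dynamics, initial state, state-of-charge bounds,
charging/discharging bounds, thermal bounds, quadratic emission constraints,
ramp constraints, energy balance, and nonnegativity of all variables. -/
def FSFeasible {Ω N G : Type*} [Fintype N] [Fintype G]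
    (P : VPPParams Ω N G) (K : ℕ) (z : DispatchVars Ω N G) : Prop :=
  (∀ n ω k, k + 2 ≤ K →
      z.es n ω (k + 1) = z.es n ω k + (P.ηc n * z.pc n ω k - P.ηd n * z.pd n ω k) * P.Δ) ∧
  (∀ n ω, z.es n ω 0 = P.Es0 n) ∧
  (∀ n ω k, k < K → P.Esmin n ≤ z.es n ω k ∧ z.es n ω k ≤ P.Esmax n) ∧
  (∀ n ω k, k < K → P.Pcmin n ≤ z.pc n ω k ∧ z.pc n ω k ≤ P.Pcmax n) ∧
  (∀ n ω k, k < K → P.Pdmin n ≤ z.pd n ω k ∧ z.pd n ω k ≤ P.Pdmax n) ∧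
  (∀ g ω k, k < K → 0 ≤ z.pth g ω k ∧ z.pth g ω k ≤ P.Pthmax g) ∧
  (∀ g ω k, k < K → P.αg g * z.pth g ω k ^ 2 + P.βg g * z.pth g ω k ≤ P.Lg g) ∧
  (∀ g ω k, k + 2 ≤ K → |z.pth g ω (k + 1) - z.pth g ω k| ≤ P.Rth g) ∧
  (∀ ω k, k < K →
      z.e ω k = P.Pv ω k * P.Δ - P.D ω k
        + (∑ n : N, (z.pd n ω k - z.pc n ω k)) * P.Δ
        + (∑ g : G, z.pth g ω k) * P.Δ + z.ens ω k) ∧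
  (∀ ω k, k < K → 0 ≤ z.e ω k ∧ 0 ≤ z.ens ω k) ∧
  (∀ n ω k, k < K → 0 ≤ z.es n ω k ∧ 0 ≤ z.pc n ω k ∧ 0 ≤ z.pd n ω k)

/-- Full-scale objective `F`: negated revenue, thermal generation costs, non-supplied
energy penalty, storage charging/discharging costs, and quadratic storage-reference
penalties, summed over scenarios and time steps. -/
noncomputable def FSObj {Ω N G : Type*} [Fintype Ω] [Fintype N] [Fintype G]
    (P : VPPParams Ω N G) (K : ℕ) (z : DispatchVars Ω N G) : ℝ :=
  (∑ ω : Ω, ∑ k ∈ Finset.range K,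
      (-(P.π ω k) * z.e ω k
        + (∑ g : G, P.Cth g * z.pth g ω k * P.Δ)
        + P.Cns * z.ens ω k
        + ∑ n : N, (P.Cc n * z.pc n ω k + P.Cd n * z.pd n ω k) * P.Δ))
    + ∑ n : N, ∑ ω : Ω, ∑ k ∈ Finset.range K, P.Cref n * (z.es n ω k - P.Eref n) ^ 2

/-- Cardinality `|K_r| = t (r+1) - t r` (as a real number) of the contiguous cluster
`K_r = {t r, ..., t (r+1) - 1}`. -/
def clusterCard (t : ℕ → ℕ) (r : ℕ) : ℝ := ((t (r + 1) - t r : ℕ) : ℝ)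

/-- Feasibility for the temporally aggregated dispatch model over a contiguous cluster
partition `K_r = {t r, ..., t (r+1) - 1}`, `r = 0, ..., R-1`, of the horizon:
aggregated balance, aggregated storage dynamics with cluster cardinality multipliers,
aggregated bounds, aggregated emission constraints with compensation term
`α_g*(|K_r|-1)*(P^th_max)²`, aggregated ramp constraints with compensation terms
`R^th_g*(|K_r|-1)/2`, and nonnegativity. -/
def AggFeasible {Ω N G : Type*} [Fintype N] [Fintype G]
    (P : VPPParams Ω N G) (R : ℕ) (t : ℕ → ℕ) (z : DispatchVars Ω N G) : Prop :=
  (∀ ω r, r < R →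
      z.e ω r = (∑ k ∈ Finset.Ico (t r) (t (r + 1)), (P.Pv ω k * P.Δ - P.D ω k))
          / clusterCard t r
        + (∑ g : G, z.pth g ω r) * P.Δ + z.ens ω r
        + (∑ n : N, (z.pd n ω r - z.pc n ω r)) * P.Δ) ∧
  (∀ n ω r, r + 2 ≤ R →
      z.es n ω (r + 1) = z.es n ω r
        + clusterCard t r * (P.ηc n * z.pc n ω r - P.ηd n * z.pd n ω r) * P.Δ) ∧
  (∀ n ω, z.es n ω 0 = P.Es0 n) ∧
  (∀ n ω r, r < R → P.Esmin n ≤ z.es n ω r ∧ z.es n ω r ≤ P.Esmax n) ∧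
  (∀ n ω r, r < R → P.Pcmin n ≤ z.pc n ω r ∧ z.pc n ω r ≤ P.Pcmax n) ∧
  (∀ n ω r, r < R → P.Pdmin n ≤ z.pd n ω r ∧ z.pd n ω r ≤ P.Pdmax n) ∧
  (∀ g ω r, r < R → 0 ≤ z.pth g ω r ∧ z.pth g ω r ≤ P.Pthmax g) ∧
  (∀ g ω r, r < R →
      P.αg g * clusterCard t r * z.pth g ω r ^ 2
        - P.αg g * (clusterCard t r - 1) * P.Pthmax g ^ 2
        + P.βg g * z.pth g ω r ≤ P.Lg g) ∧
  (∀ g ω r, r + 2 ≤ R →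
      z.pth g ω (r + 1) - z.pth g ω r * clusterCard t r
          ≤ P.Rth g + P.Rth g * (clusterCard t (r + 1) - 1) / 2 ∧
      z.pth g ω r - z.pth g ω (r + 1) * clusterCard t (r + 1)
          ≤ P.Rth g + P.Rth g * (clusterCard t r - 1) / 2) ∧
  (∀ ω r, r < R → 0 ≤ z.e ω r ∧ 0 ≤ z.ens ω r) ∧
  (∀ n ω r, r < R → 0 ≤ z.es n ω r ∧ 0 ≤ z.pc n ω r ∧ 0 ≤ z.pd n ω r)

/-- Aggregated objective `F̄`: same cost structure as `F`, with cluster-wise maximum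
prices and cluster cardinality weights. -/
noncomputable def AggObj {Ω N G : Type*} [Fintype Ω] [Fintype N] [Fintype G]
    (P : VPPParams Ω N G) (R : ℕ) (t : ℕ → ℕ) (hmono : ∀ r < R, t r < t (r + 1))
    (z : DispatchVars Ω N G) : ℝ :=
  (∑ ω : Ω, ∑ r : Fin R,
      clusterCard t r.1 *
        (-(((Finset.Ico (t r.1) (t (r.1 + 1))).sup'
              (Finset.nonempty_Ico.mpr (hmono r.1 r.2)) (P.π ω)) * z.e ω r.1)
          + (∑ g : G, P.Cth g * z.pth g ω r.1 * P.Δ)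
          + P.Cns * z.ens ω r.1
          + ∑ n : N, (P.Cc n * z.pc n ω r.1 + P.Cd n * z.pd n ω r.1) * P.Δ))
    + ∑ n : N, ∑ ω : Ω, ∑ r : Fin R, P.Cref n * (z.es n ω r.1 - P.Eref n) ^ 2

/-- The aggregation map: all aggregated variables are cluster averages, except the
aggregated storage states, which are the states at the first time step `t r` of each
cluster. -/
noncomputable def aggregate {Ω N G : Type*} (t : ℕ → ℕ) (z : DispatchVars Ω N G) :
    DispatchVars Ω N G where
  e := fun ω r => (1 / clusterCard t r) * ∑ k ∈ Finset.Ico (t r) (t (r + 1)), z.e ω k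
  ens := fun ω r => (1 / clusterCard t r) * ∑ k ∈ Finset.Ico (t r) (t (r + 1)), z.ens ω k
  es := fun n ω r => z.es n ω (t r)
  pth := fun g ω r => (1 / clusterCard t r) * ∑ k ∈ Finset.Ico (t r) (t (r + 1)), z.pth g ω k
  pc := fun n ω r => (1 / clusterCard t r) * ∑ k ∈ Finset.Ico (t r) (t (r + 1)), z.pc n ω k
  pd := fun n ω r => (1 / clusterCard t r) * ∑ k ∈ Finset.Ico (t r) (t (r + 1)), z.pd n ω k

private lemma avg_bounds (s : Finset ℕ) (hs : s.Nonempty) (f : ℕ → ℝ) {lo hi : ℝ}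
    (hlo : ∀ k ∈ s, lo ≤ f k) (hhi : ∀ k ∈ s, f k ≤ hi) :
    lo ≤ 1 / (s.card : ℝ) * ∑ k ∈ s, f k ∧ 1 / (s.card : ℝ) * ∑ k ∈ s, f k ≤ hi := by
  have hc : (0:ℝ) < s.card := by exact_mod_cast Finset.card_pos.mpr hs
  have h1 : (s.card : ℝ) * lo ≤ ∑ k ∈ s, f k := by
    calc (s.card : ℝ) * lo = ∑ _k ∈ s, lo := by rw [Finset.sum_const, nsmul_eq_mul]
      _ ≤ _ := Finset.sum_le_sum hlo
  have h2 : ∑ k ∈ s, f k ≤ (s.card : ℝ) * hi := by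
    calc ∑ k ∈ s, f k ≤ ∑ _k ∈ s, hi := Finset.sum_le_sum hhi
      _ = _ := by rw [Finset.sum_const, nsmul_eq_mul]
  constructor
  · rw [one_div, inv_mul_eq_div, le_div_iff₀ hc]; linarith
  · rw [one_div, inv_mul_eq_div, div_le_iff₀ hc]; linarith

private lemma gauss_cast (m : ℕ) :
    ∑ i ∈ Finset.range m, ((i : ℝ) + 1) = m * (m + 1) / 2 := by
  induction m with
  | zero => simp
  | succ m ih => rw [Finset.sum_range_succ, ih]; push_cast; ring

private lemma gauss_rev_cast (m : ℕ) :
    ∑ i ∈ Finset.range m, ((m - i : ℕ) : ℝ) = m * (m + 1) / 2 := by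
  induction m with
  | zero => simp
  | succ m ih =>
      rw [Finset.sum_range_succ']
      simp only [Nat.succ_sub_succ, Nat.sub_zero]
      rw [ih]
      push_cast
      ring

set_option maxHeartbeats 1000000 in
/-- Proposition 1: any feasible solution of the full-scale stochastic
dispatch model maps, via cluster averaging (and evaluation at the first time step of each
cluster for the storage states), to a feasible solution of the temporally aggregated model
with an equal or lower objective value. -/
theorem proposition1
    {Ω N G : Type*} [Fintype Ω] [Fintype N] [Fintype G]
    [Nonempty Ω] [Nonempty N] [Nonempty G]
    (P : VPPParams Ω N G) (K R : ℕ) (hK : 1 ≤ K)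
    (t : ℕ → ℕ) (ht0 : t 0 = 0) (htR : t R = K) (hmono : ∀ r < R, t r < t (r + 1))
    (hΔ : 0 < P.Δ)
    (hEs : ∀ n, P.Esmin n ≤ P.Esmax n)
    (hPc : ∀ n, P.Pcmin n ≤ P.Pcmax n)
    (hPd : ∀ n, P.Pdmin n ≤ P.Pdmax n)
    (hPth : ∀ g, 0 ≤ P.Pthmax g)
    (hα : ∀ g, 0 ≤ P.αg g)
    (hRth : ∀ g, 0 ≤ P.Rth g)
    (hCref : ∀ n, 0 ≤ P.Cref n)
    (z : DispatchVars Ω N G) (hz : FSFeasible P K z) :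
    AggFeasible P R t (aggregate t z) ∧
      AggObj P R t hmono (aggregate t z) ≤ FSObj P K z := by
  obtain ⟨hdyn, hes0, hesb, hpcb, hpdb, hpthb, hemis, hramp, hbal, hnn1, hnn2⟩ := hz
  have tmono : ∀ a b : ℕ, a ≤ b → b ≤ R → t a ≤ t b := by
    intro a b hab
    induction hab with
    | refl => intro _; exact le_rfl
    | @step c h ih =>
        intro hR
        exact le_trans (ih (by omega)) (hmono c (by omega)).le
  have htK : ∀ r, r ≤ R → t r ≤ K := by
    intro r hr
    have := tmono r R hr le_rfl
    omega
  have hsub : ∀ r, r < R → ∀ k ∈ Finset.Ico (t r) (t (r + 1)), k < K := by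
    intro r hr k hk
    rw [Finset.mem_Ico] at hk
    have := htK (r + 1) hr
    omega
  have hcard : ∀ r : ℕ, clusterCard t r = (((Finset.Ico (t r) (t (r + 1))).card : ℕ) : ℝ) := by
    intro r
    simp [clusterCard, Nat.card_Ico]
  have hcpos : ∀ r, r < R → 0 < clusterCard t r := by
    intro r hr
    have h := hmono r hr
    simp only [clusterCard]
    have h2 : 0 < t (r + 1) - t r := by omega
    exact_mod_cast h2
  have hc1le : ∀ r, r < R → 1 ≤ clusterCard t r := by
    intro r hr
    have h := hmono r hr
    simp only [clusterCard]
    have h2 : 1 ≤ t (r + 1) - t r := by omega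
    exact_mod_cast h2
  have hne : ∀ r, r < R → (Finset.Ico (t r) (t (r + 1))).Nonempty := fun r hr =>
    Finset.nonempty_Ico.mpr (hmono r hr)
  have hestel : ∀ n ω a b, a ≤ b → b < K →
      z.es n ω b = z.es n ω a
        + ∑ k ∈ Finset.Ico a b, (P.ηc n * z.pc n ω k - P.ηd n * z.pd n ω k) * P.Δ := by
    intro n ω a b hab
    induction hab with
    | refl => intro _; simp
    | @step b hb ih =>
        intro hbK
        have hb' : a ≤ b := hb
        simp only [Nat.succ_eq_add_one] at hbK ⊢
        rw [hdyn n ω b (by omega), ih (by omega), Finset.sum_Ico_succ_top hb']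
        ring
  have hrtel : ∀ g ω a b, a ≤ b → b < K →
      |z.pth g ω b - z.pth g ω a| ≤ ((b - a : ℕ) : ℝ) * P.Rth g := by
    intro g ω a b hab
    induction hab with
    | refl => intro _; simp
    | @step b hb ih =>
        intro hbK
        have hb' : a ≤ b := hb
        simp only [Nat.succ_eq_add_one] at hbK ⊢
        have h1 := hramp g ω b (by omega)
        have h2 := ih (by omega)
        have hcast : ((b + 1 - a : ℕ) : ℝ) = ((b - a : ℕ) : ℝ) + 1 := by
          have h : b + 1 - a = (b - a) + 1 := by omega
          rw [h]
          push_cast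
          ring
        rw [hcast]
        calc |z.pth g ω (b + 1) - z.pth g ω a|
            ≤ |z.pth g ω (b + 1) - z.pth g ω b| + |z.pth g ω b - z.pth g ω a| :=
              abs_sub_le _ _ _
          _ ≤ P.Rth g + ((b - a : ℕ) : ℝ) * P.Rth g := add_le_add h1 h2
          _ = _ := by ring
  have hdecomp : ∀ f : ℕ → ℝ,
      ∑ r ∈ Finset.range R, ∑ k ∈ Finset.Ico (t r) (t (r + 1)), f k
        = ∑ k ∈ Finset.range K, f k := by
    intro f
    have key : ∀ m, m ≤ R →
        ∑ r ∈ Finset.range m, ∑ k ∈ Finset.Ico (t r) (t (r + 1)), f k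
          = ∑ k ∈ Finset.Ico 0 (t m), f k := by
      intro m
      induction m with
      | zero => intro _; simp [ht0]
      | succ m ih =>
          intro hm
          rw [Finset.sum_range_succ, ih (by omega),
            Finset.sum_Ico_consecutive f (Nat.zero_le _) (tmono m (m + 1) (by omega) hm)]
    rw [key R le_rfl, htR, ← Finset.range_eq_Ico]
  constructor
  · refine ⟨?_, ?_, ?_, ?_, ?_, ?_, ?_, ?_, ?_, ?_, ?_⟩
    · -- balance
      intro ω r hr
      simp only [aggregate]
      have hcne := (hcpos r hr).ne'
      have hsum : ∑ k ∈ Finset.Ico (t r) (t (r + 1)), z.e ω k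
          = (∑ k ∈ Finset.Ico (t r) (t (r + 1)), (P.Pv ω k * P.Δ - P.D ω k))
            + (∑ n : N, ∑ k ∈ Finset.Ico (t r) (t (r + 1)), (z.pd n ω k - z.pc n ω k)) * P.Δ
            + (∑ g : G, ∑ k ∈ Finset.Ico (t r) (t (r + 1)), z.pth g ω k) * P.Δ
            + ∑ k ∈ Finset.Ico (t r) (t (r + 1)), z.ens ω k := by
        rw [Finset.sum_congr rfl fun k hk => hbal ω k (hsub r hr k hk)]
        rw [Finset.sum_add_distrib, Finset.sum_add_distrib, Finset.sum_add_distrib]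
        congr 1
        congr 1
        congr 1
        · rw [← Finset.sum_mul]
          congr 1
          exact Finset.sum_comm
        · rw [← Finset.sum_mul]
          congr 1
          exact Finset.sum_comm
      rw [hsum]
      simp only [← mul_sub, ← Finset.mul_sum, Finset.sum_sub_distrib]
      field_simp
      have hpv : ∀ x, P.Pv ω x * P.Δ = P.Δ * P.Pv ω x := fun x => mul_comm _ _
      simp only [hpv]
      ring
    · -- dynamics
      intro n ω r hr
      simp only [aggregate]
      have h1 : t (r + 1) < K := by
        have h2 : t (r + 1) < t (r + 2) := hmono (r + 1) (by omega)
        have h3 := htK (r + 2) hr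
        omega
      rw [hestel n ω (t r) (t (r + 1)) (tmono r (r + 1) (by omega) (by omega)) h1]
      congr 1
      rw [← Finset.sum_mul, Finset.sum_sub_distrib, ← Finset.mul_sum, ← Finset.mul_sum]
      have hcne := (hcpos r (by omega)).ne'
      field_simp
    · -- initial state
      intro n ω
      simp only [aggregate, ht0]
      exact hes0 n ω
    · -- es bounds
      intro n ω r hr
      simp only [aggregate]
      exact hesb n ω (t r) (by have := hmono r hr; have := htK (r + 1) hr; omega)
    · -- pc bounds
      intro n ω r hr
      simp only [aggregate]
      rw [hcard r]
      exact avg_bounds _ (hne r hr) _ (fun k hk => (hpcb n ω k (hsub r hr k hk)).1)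
        (fun k hk => (hpcb n ω k (hsub r hr k hk)).2)
    · -- pd bounds
      intro n ω r hr
      simp only [aggregate]
      rw [hcard r]
      exact avg_bounds _ (hne r hr) _ (fun k hk => (hpdb n ω k (hsub r hr k hk)).1)
        (fun k hk => (hpdb n ω k (hsub r hr k hk)).2)
    · -- pth bounds
      intro g ω r hr
      simp only [aggregate]
      rw [hcard r]
      exact avg_bounds _ (hne r hr) _ (fun k hk => (hpthb g ω k (hsub r hr k hk)).1)
        (fun k hk => (hpthb g ω k (hsub r hr k hk)).2)
    · -- emission
      intro g ω r hr
      simp only [aggregate]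
      obtain ⟨hX0, hXM⟩ := avg_bounds _ (hne r hr) (z.pth g ω)
        (fun k hk => (hpthb g ω k (hsub r hr k hk)).1)
        (fun k hk => (hpthb g ω k (hsub r hr k hk)).2)
      rw [← hcard r] at hX0 hXM
      have hjensen : (∑ k ∈ Finset.Ico (t r) (t (r + 1)), z.pth g ω k) ^ 2
          ≤ clusterCard t r * ∑ k ∈ Finset.Ico (t r) (t (r + 1)), z.pth g ω k ^ 2 := by
        have h := sq_sum_le_card_mul_sum_sq (s := Finset.Ico (t r) (t (r + 1))) (f := z.pth g ω)
        rwa [← hcard r] at h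
      have hsum2 : P.αg g * (∑ k ∈ Finset.Ico (t r) (t (r + 1)), z.pth g ω k ^ 2)
          + P.βg g * (∑ k ∈ Finset.Ico (t r) (t (r + 1)), z.pth g ω k)
          ≤ clusterCard t r * P.Lg g := by
        rw [Finset.mul_sum, Finset.mul_sum, ← Finset.sum_add_distrib]
        calc ∑ k ∈ Finset.Ico (t r) (t (r + 1)),
              (P.αg g * z.pth g ω k ^ 2 + P.βg g * z.pth g ω k)
            ≤ ∑ _k ∈ Finset.Ico (t r) (t (r + 1)), P.Lg g :=
              Finset.sum_le_sum fun k hk => hemis g ω k (hsub r hr k hk)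
          _ = clusterCard t r * P.Lg g := by
              rw [Finset.sum_const, nsmul_eq_mul, ← hcard r]
      set c := clusterCard t r with hcdef
      set S := ∑ k ∈ Finset.Ico (t r) (t (r + 1)), z.pth g ω k with hSdef
      set Q := ∑ k ∈ Finset.Ico (t r) (t (r + 1)), z.pth g ω k ^ 2 with hQdef
      set X := 1 / c * S with hXdef
      have hc := hcpos r hr
      have hXc : X * c = S := by
        rw [hXdef]
        field_simp
        exact mul_div_cancel_left₀ S hc.ne'
      have hS2 : S ^ 2 = X ^ 2 * c * c := by rw [← hXc]; ring
      have h2 : X ^ 2 * c ≤ Q := by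
        have h := hjensen
        rw [hS2] at h
        exact le_of_mul_le_mul_right (by nlinarith [h, hc]) hc
      have h3 : P.αg g * X ^ 2 + P.βg g * X ≤ P.Lg g := by
        have hq : P.αg g * (X ^ 2 * c) ≤ P.αg g * Q := mul_le_mul_of_nonneg_left h2 (hα g)
        have hbx : P.βg g * (X * c) = P.βg g * S := by rw [hXc]
        have hmul : (P.αg g * X ^ 2 + P.βg g * X) * c ≤ P.Lg g * c := by nlinarith [hq, hsum2, hbx]
        exact le_of_mul_le_mul_right hmul hc
      have hX2M : X ^ 2 ≤ P.Pthmax g ^ 2 := by nlinarith [hX0, hXM, hPth g]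
      nlinarith [h3, hX2M, hc1le r hr, hα g,
        mul_nonneg (hα g) (by linarith [hc1le r hr] : (0:ℝ) ≤ c - 1)]
    · -- ramp
      intro g ω r hr
      simp only [aggregate]
      have hrR : r < R := by omega
      have hr1R : r + 1 < R := by omega
      have hab := hmono r hrR
      have hbd : t (r + 1) < t (r + 2) := hmono (r + 1) hr1R
      have hdK : t (r + 2) ≤ K := htK (r + 2) hr
      have hc1pos := hcpos r hrR
      have hc2pos := hcpos (r + 1) hr1R
      have hc1v : clusterCard t r = ((t (r + 1) - t r : ℕ) : ℝ) := rfl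
      have hc2v : clusterCard t (r + 1) = ((t (r + 2) - t (r + 1) : ℕ) : ℝ) := rfl
      have hx : ∀ k, k < K → 0 ≤ z.pth g ω k := fun k hk => (hpthb g ω k hk).1
      constructor
      · have hb1K : t (r + 1) - 1 < K := by omega
        have hb1mem : t (r + 1) - 1 ∈ Finset.Ico (t r) (t (r + 1)) :=
          Finset.mem_Ico.mpr ⟨by omega, by omega⟩
        have hS1 : z.pth g ω (t (r + 1) - 1)
            ≤ ∑ k ∈ Finset.Ico (t r) (t (r + 1)), z.pth g ω k :=
          Finset.single_le_sum (fun k hk => hx k (hsub r hrR k hk)) hb1mem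
        have hstep : ∀ j ∈ Finset.Ico (t (r + 1)) (t (r + 2)),
            z.pth g ω j ≤ z.pth g ω (t (r + 1) - 1)
              + ((j - (t (r + 1) - 1) : ℕ) : ℝ) * P.Rth g := by
          intro j hj
          rw [Finset.mem_Ico] at hj
          have h := hrtel g ω (t (r + 1) - 1) j (by omega) (by omega)
          linarith [(abs_le.mp h).2]
        have hgauss : ∑ j ∈ Finset.Ico (t (r + 1)) (t (r + 2)), ((j - (t (r + 1) - 1) : ℕ) : ℝ)
            = clusterCard t (r + 1) * (clusterCard t (r + 1) + 1) / 2 := by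
          rw [Finset.sum_Ico_eq_sum_range]
          rw [Finset.sum_congr rfl (fun i _ => by
            show ((t (r + 1) + i - (t (r + 1) - 1) : ℕ) : ℝ) = (i : ℝ) + 1
            have he : t (r + 1) + i - (t (r + 1) - 1) = i + 1 := by omega
            rw [he]; push_cast; ring)]
          rw [gauss_cast, hc2v]
        have hsum2le : ∑ j ∈ Finset.Ico (t (r + 1)) (t (r + 2)), z.pth g ω j
            ≤ clusterCard t (r + 1) * z.pth g ω (t (r + 1) - 1)
              + clusterCard t (r + 1) * (clusterCard t (r + 1) + 1) / 2 * P.Rth g := by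
          calc ∑ j ∈ Finset.Ico (t (r + 1)) (t (r + 2)), z.pth g ω j
              ≤ ∑ j ∈ Finset.Ico (t (r + 1)) (t (r + 2)),
                  (z.pth g ω (t (r + 1) - 1) + ((j - (t (r + 1) - 1) : ℕ) : ℝ) * P.Rth g) :=
                Finset.sum_le_sum hstep
            _ = ((Finset.Ico (t (r + 1)) (t (r + 2))).card : ℝ) * z.pth g ω (t (r + 1) - 1)
                + (∑ j ∈ Finset.Ico (t (r + 1)) (t (r + 2)), ((j - (t (r + 1) - 1) : ℕ) : ℝ))
                  * P.Rth g := by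
                rw [Finset.sum_add_distrib, Finset.sum_const, nsmul_eq_mul, ← Finset.sum_mul]
            _ = _ := by rw [hgauss, ← hcard (r + 1)]
        have hkey : ∑ j ∈ Finset.Ico (t (r + 1)) (t (r + 2)), z.pth g ω j
            ≤ clusterCard t (r + 1) * ((∑ k ∈ Finset.Ico (t r) (t (r + 1)), z.pth g ω k)
              + P.Rth g + P.Rth g * (clusterCard t (r + 1) - 1) / 2) := by
          nlinarith [hsum2le, mul_le_mul_of_nonneg_left hS1 hc2pos.le]
        have e1 : 1 / clusterCard t r * (∑ k ∈ Finset.Ico (t r) (t (r + 1)), z.pth g ω k)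
            * clusterCard t r = ∑ k ∈ Finset.Ico (t r) (t (r + 1)), z.pth g ω k := by
          field_simp
        rw [e1]
        have h2 := mul_le_mul_of_nonneg_left hkey (le_of_lt (one_div_pos.mpr hc2pos))
        have e2 : 1 / clusterCard t (r + 1) * (clusterCard t (r + 1)
            * ((∑ k ∈ Finset.Ico (t r) (t (r + 1)), z.pth g ω k)
              + P.Rth g + P.Rth g * (clusterCard t (r + 1) - 1) / 2))
            = (∑ k ∈ Finset.Ico (t r) (t (r + 1)), z.pth g ω k)
              + P.Rth g + P.Rth g * (clusterCard t (r + 1) - 1) / 2 := by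
          field_simp
        rw [e2] at h2
        linarith [h2]
      · have hbK : t (r + 1) < K := by omega
        have hbmem : t (r + 1) ∈ Finset.Ico (t (r + 1)) (t (r + 2)) :=
          Finset.mem_Ico.mpr ⟨le_rfl, hbd⟩
        have hS2 : z.pth g ω (t (r + 1))
            ≤ ∑ k ∈ Finset.Ico (t (r + 1)) (t (r + 2)), z.pth g ω k :=
          Finset.single_le_sum (fun k hk => hx k (hsub (r + 1) hr1R k hk)) hbmem
        have hstep : ∀ j ∈ Finset.Ico (t r) (t (r + 1)),
            z.pth g ω j ≤ z.pth g ω (t (r + 1))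
              + ((t (r + 1) - j : ℕ) : ℝ) * P.Rth g := by
          intro j hj
          rw [Finset.mem_Ico] at hj
          have h := hrtel g ω j (t (r + 1)) (by omega) hbK
          linarith [(abs_le.mp h).1]
        have hgauss : ∑ j ∈ Finset.Ico (t r) (t (r + 1)), ((t (r + 1) - j : ℕ) : ℝ)
            = clusterCard t r * (clusterCard t r + 1) / 2 := by
          rw [Finset.sum_Ico_eq_sum_range]
          rw [Finset.sum_congr rfl (fun i _ => by
            show ((t (r + 1) - (t r + i) : ℕ) : ℝ) = ((t (r + 1) - t r - i : ℕ) : ℝ)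
            congr 1
            omega)]
          rw [gauss_rev_cast, hc1v]
        have hsum1le : ∑ j ∈ Finset.Ico (t r) (t (r + 1)), z.pth g ω j
            ≤ clusterCard t r * z.pth g ω (t (r + 1))
              + clusterCard t r * (clusterCard t r + 1) / 2 * P.Rth g := by
          calc ∑ j ∈ Finset.Ico (t r) (t (r + 1)), z.pth g ω j
              ≤ ∑ j ∈ Finset.Ico (t r) (t (r + 1)),
                  (z.pth g ω (t (r + 1)) + ((t (r + 1) - j : ℕ) : ℝ) * P.Rth g) :=
                Finset.sum_le_sum hstep
            _ = ((Finset.Ico (t r) (t (r + 1))).card : ℝ) * z.pth g ω (t (r + 1))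
                + (∑ j ∈ Finset.Ico (t r) (t (r + 1)), ((t (r + 1) - j : ℕ) : ℝ)) * P.Rth g := by
                rw [Finset.sum_add_distrib, Finset.sum_const, nsmul_eq_mul, ← Finset.sum_mul]
            _ = _ := by rw [hgauss, ← hcard r]
        have hkey : ∑ j ∈ Finset.Ico (t r) (t (r + 1)), z.pth g ω j
            ≤ clusterCard t r * ((∑ k ∈ Finset.Ico (t (r + 1)) (t (r + 2)), z.pth g ω k)
              + P.Rth g + P.Rth g * (clusterCard t r - 1) / 2) := by
          nlinarith [hsum1le, mul_le_mul_of_nonneg_left hS2 hc1pos.le]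
        have e1 : 1 / clusterCard t (r + 1)
            * (∑ k ∈ Finset.Ico (t (r + 1)) (t (r + 2)), z.pth g ω k)
            * clusterCard t (r + 1)
            = ∑ k ∈ Finset.Ico (t (r + 1)) (t (r + 2)), z.pth g ω k := by
          field_simp
        rw [e1]
        have h2 := mul_le_mul_of_nonneg_left hkey (le_of_lt (one_div_pos.mpr hc1pos))
        have e2 : 1 / clusterCard t r * (clusterCard t r
            * ((∑ k ∈ Finset.Ico (t (r + 1)) (t (r + 2)), z.pth g ω k)
              + P.Rth g + P.Rth g * (clusterCard t r - 1) / 2))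
            = (∑ k ∈ Finset.Ico (t (r + 1)) (t (r + 2)), z.pth g ω k)
              + P.Rth g + P.Rth g * (clusterCard t r - 1) / 2 := by
          field_simp
        rw [e2] at h2
        linarith [h2]
    · -- e, ens nonneg
      intro ω r hr
      simp only [aggregate]
      have h0 : (0:ℝ) ≤ 1 / clusterCard t r := le_of_lt (one_div_pos.mpr (hcpos r hr))
      exact ⟨mul_nonneg h0 (Finset.sum_nonneg fun k hk => (hnn1 ω k (hsub r hr k hk)).1),
        mul_nonneg h0 (Finset.sum_nonneg fun k hk => (hnn1 ω k (hsub r hr k hk)).2)⟩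
    · -- es, pc, pd nonneg
      intro n ω r hr
      simp only [aggregate]
      have h0 : (0:ℝ) ≤ 1 / clusterCard t r := le_of_lt (one_div_pos.mpr (hcpos r hr))
      have htrK : t r < K := by have := hmono r hr; have := htK (r + 1) hr; omega
      exact ⟨(hnn2 n ω (t r) htrK).1,
        mul_nonneg h0 (Finset.sum_nonneg fun k hk => (hnn2 n ω k (hsub r hr k hk)).2.1),
        mul_nonneg h0 (Finset.sum_nonneg fun k hk => (hnn2 n ω k (hsub r hr k hk)).2.2)⟩
  · -- objective
    simp only [AggObj, FSObj, aggregate]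
    apply add_le_add
    · apply Finset.sum_le_sum
      intro ω _
      have hcl : ∀ r (hrR : r < R),
          clusterCard t r
            * (-(((Finset.Ico (t r) (t (r + 1))).sup'
                  (Finset.nonempty_Ico.mpr (hmono r hrR)) (P.π ω))
                * (1 / clusterCard t r * ∑ k ∈ Finset.Ico (t r) (t (r + 1)), z.e ω k))
              + (∑ g : G, P.Cth g
                  * (1 / clusterCard t r * ∑ k ∈ Finset.Ico (t r) (t (r + 1)), z.pth g ω k)
                  * P.Δ)
              + P.Cns * (1 / clusterCard t r * ∑ k ∈ Finset.Ico (t r) (t (r + 1)), z.ens ω k)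
              + ∑ n : N, (P.Cc n
                  * (1 / clusterCard t r * ∑ k ∈ Finset.Ico (t r) (t (r + 1)), z.pc n ω k)
                + P.Cd n
                  * (1 / clusterCard t r * ∑ k ∈ Finset.Ico (t r) (t (r + 1)), z.pd n ω k))
                * P.Δ)
          ≤ ∑ k ∈ Finset.Ico (t r) (t (r + 1)), (-P.π ω k * z.e ω k
              + (∑ g : G, P.Cth g * z.pth g ω k * P.Δ)
              + P.Cns * z.ens ω k
              + ∑ n : N, (P.Cc n * z.pc n ω k + P.Cd n * z.pd n ω k) * P.Δ) := by
        intro r hrR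
        have hc := hcpos r hrR
        have hcne := hc.ne'
        have hg : ∑ g : G, P.Cth g
              * (1 / clusterCard t r * ∑ k ∈ Finset.Ico (t r) (t (r + 1)), z.pth g ω k) * P.Δ
            = 1 / clusterCard t r * ∑ g : G,
                P.Cth g * (∑ k ∈ Finset.Ico (t r) (t (r + 1)), z.pth g ω k) * P.Δ := by
          rw [Finset.mul_sum]
          exact Finset.sum_congr rfl fun g _ => by ring
        have hn : ∑ n : N, (P.Cc n
              * (1 / clusterCard t r * ∑ k ∈ Finset.Ico (t r) (t (r + 1)), z.pc n ω k)
              + P.Cd n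
              * (1 / clusterCard t r * ∑ k ∈ Finset.Ico (t r) (t (r + 1)), z.pd n ω k)) * P.Δ
            = 1 / clusterCard t r * ∑ n : N,
                (P.Cc n * (∑ k ∈ Finset.Ico (t r) (t (r + 1)), z.pc n ω k)
                  + P.Cd n * (∑ k ∈ Finset.Ico (t r) (t (r + 1)), z.pd n ω k)) * P.Δ := by
          rw [Finset.mul_sum]
          exact Finset.sum_congr rfl fun n _ => by ring
        have hRHS : ∑ k ∈ Finset.Ico (t r) (t (r + 1)), (-P.π ω k * z.e ω k
            + (∑ g : G, P.Cth g * z.pth g ω k * P.Δ)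
            + P.Cns * z.ens ω k
            + ∑ n : N, (P.Cc n * z.pc n ω k + P.Cd n * z.pd n ω k) * P.Δ)
            = -(∑ k ∈ Finset.Ico (t r) (t (r + 1)), P.π ω k * z.e ω k)
              + (∑ g : G, P.Cth g * (∑ k ∈ Finset.Ico (t r) (t (r + 1)), z.pth g ω k) * P.Δ)
              + P.Cns * (∑ k ∈ Finset.Ico (t r) (t (r + 1)), z.ens ω k)
              + ∑ n : N, (P.Cc n * (∑ k ∈ Finset.Ico (t r) (t (r + 1)), z.pc n ω k)
                  + P.Cd n * (∑ k ∈ Finset.Ico (t r) (t (r + 1)), z.pd n ω k)) * P.Δ := by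
          rw [Finset.sum_add_distrib, Finset.sum_add_distrib, Finset.sum_add_distrib]
          congr 1
          congr 1
          congr 1
          · rw [← Finset.sum_neg_distrib]
            exact Finset.sum_congr rfl fun k _ => by ring
          · rw [Finset.sum_comm]
            exact Finset.sum_congr rfl fun g _ => by
              rw [← Finset.sum_mul, ← Finset.mul_sum]
          · rw [← Finset.mul_sum]
          · rw [Finset.sum_comm]
            exact Finset.sum_congr rfl fun n _ => by
              rw [← Finset.sum_mul, Finset.sum_add_distrib, ← Finset.mul_sum, ← Finset.mul_sum]
        have hprice : ∑ k ∈ Finset.Ico (t r) (t (r + 1)), P.π ω k * z.e ω k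
            ≤ ((Finset.Ico (t r) (t (r + 1))).sup'
                (Finset.nonempty_Ico.mpr (hmono r hrR)) (P.π ω))
              * ∑ k ∈ Finset.Ico (t r) (t (r + 1)), z.e ω k := by
          rw [Finset.mul_sum]
          exact Finset.sum_le_sum fun k hk =>
            mul_le_mul_of_nonneg_right (Finset.le_sup' (P.π ω) hk)
              (hnn1 ω k (hsub r hrR k hk)).1
        rw [hRHS, hg, hn]
        set πb := (Finset.Ico (t r) (t (r + 1))).sup'
          (Finset.nonempty_Ico.mpr (hmono r hrR)) (P.π ω) with hπb
        have hLHS : clusterCard t r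
            * (-(πb * (1 / clusterCard t r * ∑ k ∈ Finset.Ico (t r) (t (r + 1)), z.e ω k))
              + 1 / clusterCard t r * ∑ g : G,
                  P.Cth g * (∑ k ∈ Finset.Ico (t r) (t (r + 1)), z.pth g ω k) * P.Δ
              + P.Cns * (1 / clusterCard t r * ∑ k ∈ Finset.Ico (t r) (t (r + 1)), z.ens ω k)
              + 1 / clusterCard t r * ∑ n : N,
                  (P.Cc n * (∑ k ∈ Finset.Ico (t r) (t (r + 1)), z.pc n ω k)
                    + P.Cd n * (∑ k ∈ Finset.Ico (t r) (t (r + 1)), z.pd n ω k)) * P.Δ)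
            = -(πb * ∑ k ∈ Finset.Ico (t r) (t (r + 1)), z.e ω k)
              + (∑ g : G, P.Cth g * (∑ k ∈ Finset.Ico (t r) (t (r + 1)), z.pth g ω k) * P.Δ)
              + P.Cns * (∑ k ∈ Finset.Ico (t r) (t (r + 1)), z.ens ω k)
              + ∑ n : N, (P.Cc n * (∑ k ∈ Finset.Ico (t r) (t (r + 1)), z.pc n ω k)
                  + P.Cd n * (∑ k ∈ Finset.Ico (t r) (t (r + 1)), z.pd n ω k)) * P.Δ := by
          field_simp
          have hth : ∀ x (s : Finset ℕ), (P.Cth x * ∑ k ∈ s, z.pth x ω k) * P.Δ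
              = P.Δ * P.Cth x * ∑ k ∈ s, z.pth x ω k := fun _ _ => by ring
          simp only [hth]
        rw [hLHS]
        linarith [hprice]
      apply le_trans (Finset.sum_le_sum (fun (x : Fin R) _ => hcl x.1 x.2))
      rw [Fin.sum_univ_eq_sum_range
        (fun r => ∑ k ∈ Finset.Ico (t r) (t (r + 1)), (-P.π ω k * z.e ω k
          + (∑ g : G, P.Cth g * z.pth g ω k * P.Δ)
          + P.Cns * z.ens ω k
          + ∑ n : N, (P.Cc n * z.pc n ω k + P.Cd n * z.pd n ω k) * P.Δ)) R]
      rw [hdecomp]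
    · apply Finset.sum_le_sum
      intro n _
      apply Finset.sum_le_sum
      intro ω _
      have hclB : ∀ r (hrR : r < R),
          P.Cref n * (z.es n ω (t r) - P.Eref n) ^ 2
            ≤ ∑ k ∈ Finset.Ico (t r) (t (r + 1)), P.Cref n * (z.es n ω k - P.Eref n) ^ 2 :=
        fun r hrR =>
          Finset.single_le_sum (f := fun k => P.Cref n * (z.es n ω k - P.Eref n) ^ 2)
            (fun k _ => mul_nonneg (hCref n) (sq_nonneg _))
            (Finset.mem_Ico.mpr ⟨le_rfl, hmono r hrR⟩)
      apply le_trans (Finset.sum_le_sum (fun (x : Fin R) _ => hclB x.1 x.2))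
      rw [Fin.sum_univ_eq_sum_range
        (fun r => ∑ k ∈ Finset.Ico (t r) (t (r + 1)), P.Cref n * (z.es n ω k - P.Eref n) ^ 2) R]
      rw [hdecomp]
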